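/- Given fixed positive weights w₁,…,w_N summing to 1 and Gaussian encoders N(μᵢ, Σᵢ), the Gaussian N(μ*, Σ*) minimizing ∑ᵢ wᵢ KL(N(μᵢ,Σᵢ) ‖ N(μ,Σ)) over μ ∈ ℝ^d and positive definite Σ has μ* = ∑ᵢ wᵢ μᵢ and Σ* = ∑ᵢ wᵢ (Σᵢ + (μᵢ − μ*)(μᵢ − μ*)ᵀ). -/

import Mathlib

open Finset Matrix

section klHelpers
variable {d : ℕ}

private lemma kl_trace_mul_vecMulVec (A : Matrix (Fin d) (Fin d) ℝ) (x : Fin d → ℝ) :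
    (A * vecMulVec x x).trace = x ⬝ᵥ A.mulVec x := by
  simp only [Matrix.trace, Matrix.diag, Matrix.mul_apply, vecMulVec_apply, dotProduct,
    Matrix.mulVec, Finset.mul_sum]
  exact Finset.sum_congr rfl fun i _ => Finset.sum_congr rfl fun j _ => by ring

private lemma kl_vecMulVec_quadForm (v x : Fin d → ℝ) :
    x ⬝ᵥ (vecMulVec v v).mulVec x = (v ⬝ᵥ x) ^ 2 := by
  have h : (v ⬝ᵥ x) ^ 2 = ∑ i, ∑ j, (v i * x i) * (v j * x j) := by
    rw [sq, dotProduct, Finset.sum_mul_sum]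
  rw [h]
  simp only [dotProduct, Matrix.mulVec, vecMulVec_apply, Finset.mul_sum]
  exact Finset.sum_congr rfl fun i _ => Finset.sum_congr rfl fun j _ => by ring

private lemma kl_trace_eq_sum_eigenvalues {A : Matrix (Fin d) (Fin d) ℝ}
    (hA : A.IsHermitian) : A.trace = ∑ i, hA.eigenvalues i := by
  conv_lhs => rw [hA.spectral_theorem, Unitary.conjStarAlgAut_apply]
  rw [Matrix.trace_mul_cycle]
  have h1 : (star (hA.eigenvectorUnitary : Matrix (Fin d) (Fin d) ℝ)) *
      (hA.eigenvectorUnitary : Matrix (Fin d) (Fin d) ℝ) = 1 :=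
    Unitary.coe_star_mul_self hA.eigenvectorUnitary
  rw [h1, Matrix.one_mul, Matrix.trace_diagonal]
  simp

private lemma kl_weighted_shift {N : ℕ} (w : Fin N → ℝ) (hwsum : ∑ i, w i = 1)
    (a b : Fin N → ℝ) (x y : ℝ) :
    ∑ i, w i * ((x - a i) * (y - b i)) =
      ∑ i, w i * ((a i - ∑ j, w j * a j) * (b i - ∑ j, w j * b j)) +
        (x - ∑ j, w j * a j) * (y - ∑ j, w j * b j) := by
  set A := ∑ j, w j * a j with hA
  set B := ∑ j, w j * b j with hB
  have e2 : ∀ u v : ℝ, ∑ i, w i * ((u - a i) * (v - b i))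
      = u * v - B * u - A * v + ∑ i, w i * (a i * b i) := by
    intro u v
    calc ∑ i, w i * ((u - a i) * (v - b i))
        = ∑ i, (w i * (u * v) - (w i * b i) * u - (w i * a i) * v + w i * (a i * b i)) :=
          Finset.sum_congr rfl fun i _ => by ring
      _ = (∑ i, w i) * (u * v) - (∑ i, w i * b i) * u - (∑ i, w i * a i) * v
            + ∑ i, w i * (a i * b i) := by
          rw [Finset.sum_add_distrib, Finset.sum_sub_distrib, Finset.sum_sub_distrib,
            Finset.sum_mul, Finset.sum_mul, Finset.sum_mul]
      _ = u * v - B * u - A * v + ∑ i, w i * (a i * b i) := by rw [hwsum, ← hA, ← hB]; ring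
  have e3 : ∑ i, w i * ((a i - A) * (b i - B)) = ∑ i, w i * ((A - a i) * (B - b i)) :=
    Finset.sum_congr rfl fun i _ => by ring
  rw [e3, e2, e2]; ring

open scoped MatrixOrder in
private lemma kl_trace_inv_mul_ge {C T : Matrix (Fin d) (Fin d) ℝ}
    (hC : C.PosDef) (hT : T.PosDef) :
    (d : ℝ) + Real.log T.det - Real.log C.det ≤ (C⁻¹ * T).trace := by
  set B := CFC.sqrt T with hBdef
  have hB : B * B = T := CFC.sqrt_mul_sqrt_self T hT.posSemidef.nonneg
  have hBh : B.IsHermitian := (CFC.sqrt_nonneg T).posSemidef.isHermitian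
  have hBt : Bᵀ = B := by
    have h := hBh.eq
    rw [show Bᴴ = Bᵀ from by ext i j; simp [Matrix.conjTranspose_apply]] at h
    exact h
  have hTdet : T.det ≠ 0 := hT.det_pos.ne'
  have hCdet : C.det ≠ 0 := hC.det_pos.ne'
  have hBdet : B.det ≠ 0 := by
    intro h
    apply hTdet
    rw [← hB, Matrix.det_mul, h, mul_zero]
  have hCinv : (C⁻¹).PosDef := hC.inv
  have hMpd : (B * C⁻¹ * B).PosDef := by
    refine PosDef.of_dotProduct_mulVec_pos ?_ ?_
    · show (B * C⁻¹ * B)ᴴ = B * C⁻¹ * B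
      rw [Matrix.conjTranspose_mul, Matrix.conjTranspose_mul, hBh.eq, hCinv.isHermitian.eq,
        Matrix.mul_assoc]
    · intro x hx
      have hBx : B.mulVec x ≠ 0 := by
        intro h0
        apply hx
        have h1 : T.mulVec x = 0 := by
          rw [← hB, ← Matrix.mulVec_mulVec, h0, Matrix.mulVec_zero]
        have h2 := congrArg (T⁻¹.mulVec) h1
        rwa [Matrix.mulVec_mulVec, Matrix.nonsing_inv_mul _ (isUnit_iff_ne_zero.mpr hTdet),
          Matrix.one_mulVec, Matrix.mulVec_zero] at h2
      have hq := hCinv.dotProduct_mulVec_pos hBx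
      have he : dotProduct (star x) ((B * C⁻¹ * B).mulVec x)
          = dotProduct (star (B.mulVec x)) (C⁻¹.mulVec (B.mulVec x)) := by
        rw [star_trivial, star_trivial, Matrix.mul_assoc]
        rw [show (B * (C⁻¹ * B)) *ᵥ x = B *ᵥ ((C⁻¹ * B) *ᵥ x) from
          (Matrix.mulVec_mulVec _ _ _).symm]
        rw [Matrix.dotProduct_mulVec x B, ← Matrix.mulVec_transpose, hBt]
        rw [show (C⁻¹ * B) *ᵥ x = C⁻¹ *ᵥ (B *ᵥ x) from (Matrix.mulVec_mulVec _ _ _).symm]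
      rw [he]; exact hq
  have hMh := hMpd.isHermitian
  have hpos : ∀ i, 0 < hMh.eigenvalues i := hMpd.eigenvalues_pos
  have htr : (B * C⁻¹ * B).trace = ∑ i, hMh.eigenvalues i := kl_trace_eq_sum_eigenvalues hMh
  have hdet : (B * C⁻¹ * B).det = ∏ i, hMh.eigenvalues i := by
    have := hMh.det_eq_prod_eigenvalues
    simpa using this
  have htr2 : (C⁻¹ * T).trace = (B * C⁻¹ * B).trace := by
    rw [← hB, ← Matrix.mul_assoc, Matrix.trace_mul_comm, ← Matrix.mul_assoc]
  have hdet2 : (B * C⁻¹ * B).det = T.det / C.det := by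
    rw [Matrix.det_mul, Matrix.det_mul, Matrix.det_nonsing_inv, ← hB, Matrix.det_mul, Ring.inverse_eq_inv']
    field_simp
  have hlog : Real.log T.det - Real.log C.det = ∑ i, Real.log (hMh.eigenvalues i) := by
    rw [← Real.log_div hTdet hCdet, ← hdet2, hdet, Real.log_prod]
    exact fun i _ => (hpos i).ne'
  have hsum : (d : ℝ) ≤ ∑ i, (hMh.eigenvalues i - Real.log (hMh.eigenvalues i)) := by
    calc (d : ℝ) = ∑ _i : Fin d, (1 : ℝ) := by simp
      _ ≤ _ := Finset.sum_le_sum fun i _ => by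
          have := Real.log_le_sub_one_of_pos (hpos i)
          linarith
  rw [Finset.sum_sub_distrib] at hsum
  rw [htr2, htr]
  linarith [hlog, hsum]

end klHelpers

/-- The Gaussian `N(μ*, Σ*)` with `μ* = ∑ᵢ wᵢ μᵢ` and
`Σ* = ∑ᵢ wᵢ (Σᵢ + (μᵢ − μ*)(μᵢ − μ*)ᵀ)` minimizes
`∑ᵢ wᵢ KL(N(μᵢ,Σᵢ) ‖ N(μ,Σ))` over means `μ` and positive definite covariances
`Σ` (closed-form codebook/centroid update of Davis & Dhillon 2006), where the KL
divergence between Gaussians is given by its standard closed form. -/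
theorem gaussian_kl_centroid {d N : ℕ} (hN : 0 < N)
    (w : Fin N → ℝ) (hw : ∀ i, 0 < w i) (hwsum : ∑ i, w i = 1)
    (μ : Fin N → (Fin d → ℝ)) (S : Fin N → Matrix (Fin d) (Fin d) ℝ)
    (hS : ∀ i, (S i).PosDef)
    (klG : (Fin d → ℝ) → Matrix (Fin d) (Fin d) ℝ →
      (Fin d → ℝ) → Matrix (Fin d) (Fin d) ℝ → ℝ)
    (hklG : ∀ m₁ S₁ m₂ S₂, klG m₁ S₁ m₂ S₂ =
      (1 / 2) * ((S₂⁻¹ * S₁).trace + (m₂ - m₁) ⬝ᵥ S₂⁻¹.mulVec (m₂ - m₁) -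
        (d : ℝ) + Real.log (S₂.det / S₁.det)))
    (μs : Fin d → ℝ) (hμs : μs = ∑ i, w i • μ i)
    (Ss : Matrix (Fin d) (Fin d) ℝ)
    (hSs : Ss = ∑ i, w i • (S i + vecMulVec (μ i - μs) (μ i - μs))) :
    ∀ (m : Fin d → ℝ) (C : Matrix (Fin d) (Fin d) ℝ), C.PosDef →
      ∑ i, w i * klG (μ i) (S i) μs Ss ≤ ∑ i, w i * klG (μ i) (S i) m C := by
  intro m C hC
  have hmu : ∀ j, μs j = ∑ i, w i * μ i j := by
    intro j
    rw [hμs]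
    simp [Finset.sum_apply]
  -- key matrix identity: the weighted second-moment matrix around any m
  have key : ∀ x : Fin d → ℝ,
      ∑ i, w i • (S i + vecMulVec (x - μ i) (x - μ i))
        = Ss + vecMulVec (x - μs) (x - μs) := by
    intro x
    rw [hSs]
    ext j k
    simp only [Matrix.sum_apply, Matrix.add_apply, Matrix.smul_apply, vecMulVec_apply,
      Pi.sub_apply, smul_eq_mul]
    have split : ∀ f : Fin N → ℝ,
        ∑ i, w i * (S i j k + f i) = ∑ i, w i * S i j k + ∑ i, w i * f i := by
      intro f
      rw [← Finset.sum_add_distrib]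
      exact Finset.sum_congr rfl fun i _ => by ring
    rw [split, split]
    have hws := kl_weighted_shift w hwsum (fun i => μ i j) (fun i => μ i k) (x j) (x k)
    rw [hmu j, hmu k]
    linarith [hws]
  -- Ss is positive definite
  have hSsPD : Ss.PosDef := by
    refine PosDef.of_dotProduct_mulVec_pos ?_ ?_
    · show Ssᴴ = Ss
      rw [hSs]
      ext j k
      simp only [Matrix.conjTranspose_apply, Matrix.sum_apply, Matrix.smul_apply,
        Matrix.add_apply, vecMulVec_apply, Pi.sub_apply, smul_eq_mul, star_trivial]
      refine Finset.sum_congr rfl fun i _ => ?_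
      have hsym : S i k j = S i j k := by
        have h := congrFun (congrFun (hS i).isHermitian.eq j) k
        simpa [Matrix.conjTranspose_apply] using h
      rw [hsym]; ring
    · intro x hx
      have hform : dotProduct (star x) (Ss.mulVec x)
          = ∑ i, w i * (x ⬝ᵥ (S i).mulVec x + ((μ i - μs) ⬝ᵥ x) ^ 2) := by
        rw [star_trivial, ← kl_trace_mul_vecMulVec, hSs, Matrix.sum_mul, Matrix.trace_sum]
        refine Finset.sum_congr rfl fun i _ => ?_
        rw [Matrix.smul_mul, Matrix.trace_smul, Matrix.add_mul, Matrix.trace_add,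
          kl_trace_mul_vecMulVec, kl_trace_mul_vecMulVec, kl_vecMulVec_quadForm]
        simp [smul_eq_mul]
      rw [hform]
      refine Finset.sum_pos (fun i _ => ?_) ⟨⟨0, hN⟩, Finset.mem_univ _⟩
      refine mul_pos (hw i) (add_pos_of_pos_of_nonneg ?_ (sq_nonneg _))
      have := (hS i).dotProduct_mulVec_pos hx
      rwa [star_trivial] at this
  -- reduction of the weighted objective
  have hF : ∀ (m' : Fin d → ℝ) (C' : Matrix (Fin d) (Fin d) ℝ), C'.PosDef →
      ∑ i, w i * klG (μ i) (S i) m' C'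
        = 1 / 2 * (C'⁻¹ * (Ss + vecMulVec (m' - μs) (m' - μs))).trace
          + 1 / 2 * (Real.log C'.det - d)
          - 1 / 2 * ∑ i, w i * Real.log (S i).det := by
    intro m' C' hC'
    have hterm : ∀ i, w i * klG (μ i) (S i) m' C'
        = 1 / 2 * (C'⁻¹ * (w i • (S i + vecMulVec (m' - μ i) (m' - μ i)))).trace
          + (w i * (1 / 2 * (Real.log C'.det - d)) - 1 / 2 * (w i * Real.log (S i).det)) := by
      intro i
      rw [hklG, Real.log_div hC'.det_pos.ne' (hS i).det_pos.ne', Matrix.mul_smul,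
        Matrix.trace_smul, Matrix.mul_add, Matrix.trace_add, kl_trace_mul_vecMulVec]
      simp only [smul_eq_mul]
      ring
    rw [Finset.sum_congr rfl fun i _ => hterm i, Finset.sum_add_distrib,
      Finset.sum_sub_distrib, ← Finset.mul_sum, ← Finset.mul_sum, ← Matrix.trace_sum,
      ← Matrix.mul_sum, key m', ← Finset.sum_mul, hwsum, one_mul]
    ring
  -- evaluate at the optimum
  have hvv0 : vecMulVec (μs - μs) (μs - μs) = 0 := by
    ext j k
    simp [vecMulVec_apply]
  have hSsdet : IsUnit Ss.det := isUnit_iff_ne_zero.mpr hSsPD.det_pos.ne'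
  have hLHS : (Ss⁻¹ * (Ss + vecMulVec (μs - μs) (μs - μs))).trace = (d : ℝ) := by
    rw [hvv0, add_zero, Matrix.nonsing_inv_mul _ hSsdet, Matrix.trace_one]
    simp
  rw [hF μs Ss hSsPD, hF m C hC, hLHS]
  -- split the trace on the right
  have hsplit : (C⁻¹ * (Ss + vecMulVec (m - μs) (m - μs))).trace
      = (C⁻¹ * Ss).trace + (m - μs) ⬝ᵥ C⁻¹.mulVec (m - μs) := by
    rw [Matrix.mul_add, Matrix.trace_add, kl_trace_mul_vecMulVec]
  have hquad : 0 ≤ (m - μs) ⬝ᵥ C⁻¹.mulVec (m - μs) := by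
    have := hC.inv.posSemidef.dotProduct_mulVec_nonneg (m - μs)
    rwa [star_trivial] at this
  have hcore := kl_trace_inv_mul_ge hC hSsPD
  rw [hsplit]
  linarith
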